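/- Fix N ≥ 2, K > 0, A > 0, ω ∈ ℝ^N, T > 0, ā ∈ [0, A], and α ∈ ℝ^N. For each ε > 0 let a^ε : [0,T] → ℝ^{N×N} be measurable with a^ε(t) symmetric and 0 ≤ a^ε_{ij}(t) ≤ A for all i, j, t, and let θ^ε : [0,T] → ℝ^N be continuous and satisfy the integral equation θ^ε_i(t) = α_i + ∫_0^t [ω_i + (K/N)·∑_{j=1}^N a^ε_{ij}(s)·sin(θ^ε_j(s) − θ^ε_i(s))] ds for all t ∈ [0,T] and all i. Let θ̄ : [0,T] → ℝ^N be the solution of the averaged system dθ̄_i/dt = ω_i + (K/N)·∑_{j=1}^N ā·sin(θ̄_j − θ̄_i) with θ̄(0) = α. If for all i, j one has sup_{t∈[0,T]} |∫_0^t (a^ε_{ij}(s) − ā) ds| → 0 as ε → 0, then sup_{t∈[0,T]} max_i |θ^ε_i(t) − θ̄_i(t)| → 0 as ε → 0. -/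

import Mathlib

open Real MeasureTheory intervalIntegral
open Set

lemma KAP.II {f : ℝ → ℝ} (hm : Measurable f) {M : ℝ} (hb : ∀ s, |f s| ≤ M) (x y : ℝ) :
    IntervalIntegrable f volume x y := by
  constructor <;>
  · refine (integrable_const M).mono' hm.aestronglyMeasurable.restrict ?_
    filter_upwards with s using by simpa [Real.norm_eq_abs] using hb s

lemma KAP.osc {b g g' : ℝ → ℝ} {A' M δ T : ℝ}
    (hbm : Measurable b) (hbd : ∀ s, |b s| ≤ A')
    (hg : Continuous g) (hg1 : ∀ s, |g s| ≤ 1)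
    (hg' : Continuous g') (hgM : ∀ s, |g' s| ≤ M)
    (hT : 0 ≤ T)
    (hderiv : ∀ x ∈ Set.Ioo (0:ℝ) T, HasDerivAt g (g' x) x)
    (hF : ∀ s ∈ Set.Icc (0:ℝ) T, |∫ u in (0:ℝ)..s, b u| ≤ δ)
    {t : ℝ} (ht : t ∈ Set.Icc (0:ℝ) T) :
    |∫ s in (0:ℝ)..t, b s * g s| ≤ δ * (1 + M * T) := by
  obtain ⟨ht0, htT⟩ := ht
  have hδ : 0 ≤ δ := by simpa using hF 0 ⟨le_rfl, hT⟩
  have hM : 0 ≤ M := le_trans (abs_nonneg _) (hgM 0)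
  have hA' : 0 ≤ A' := le_trans (abs_nonneg _) (hbd 0)
  set F : ℝ → ℝ := fun s => ∫ u in (0:ℝ)..s, b u with hFdef
  -- FTC
  have ftc : ∀ s ∈ Set.Icc (0:ℝ) t, (∫ u in s..t, g' u) = g t - g s := by
    intro s hs
    exact intervalIntegral.integral_eq_sub_of_hasDerivAt_of_le hs.2 hg.continuousOn
      (fun x hx => hderiv x ⟨lt_of_le_of_lt hs.1 hx.1, lt_of_lt_of_le hx.2 htT⟩)
      (hg'.intervalIntegrable _ _)
  have ib : IntervalIntegrable b volume 0 t := KAP.II hbm hbd 0 t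
  have ibg : IntervalIntegrable (fun s => b s * g s) volume 0 t := by
    refine KAP.II (hbm.mul hg.measurable) (M := A') (fun s => ?_) 0 t
    rw [Pi.mul_apply, abs_mul]
    simpa using mul_le_mul (hbd s) (hg1 s) (abs_nonneg _) hA'
  have ibgt : IntervalIntegrable (fun s => b s * g t) volume 0 t := ib.mul_const (g t)
  -- Step B
  have e1 : (∫ s in (0:ℝ)..t, b s * g s)
      = F t * g t - ∫ s in (0:ℝ)..t, b s * (g t - g s) := by
    have h2 : (∫ s in (0:ℝ)..t, b s * (g t - g s))
        = (∫ s in (0:ℝ)..t, b s * g t) - ∫ s in (0:ℝ)..t, b s * g s := by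
      rw [← intervalIntegral.integral_sub ibgt ibg]
      apply intervalIntegral.integral_congr
      intro s _; ring
    rw [h2, intervalIntegral.integral_mul_const]; ring
  have e2 : (∫ s in (0:ℝ)..t, b s * (g t - g s))
      = ∫ s in (0:ℝ)..t, b s * ∫ u in s..t, g' u := by
    apply intervalIntegral.integral_congr
    intro s hs
    rw [Set.uIcc_of_le ht0] at hs
    show b s * (g t - g s) = b s * ∫ u in s..t, g' u
    rw [ftc s hs]
  -- Fubini
  have fub : (∫ s in (0:ℝ)..t, b s * ∫ u in s..t, g' u) = ∫ u in (0:ℝ)..t, g' u * F u := by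
    rw [intervalIntegral.integral_of_le ht0, intervalIntegral.integral_of_le ht0]
    set μ := volume.restrict (Set.Ioc (0:ℝ) t) with hμ
    haveI : IsFiniteMeasure μ := ⟨by rw [hμ, Measure.restrict_apply_univ]; exact measure_Ioc_lt_top⟩
    set f : ℝ → ℝ → ℝ := fun s u => if s < u then b s * g' u else 0 with hf
    have hfmeas : Measurable (Function.uncurry f) := by
      have : Function.uncurry f
          = Set.indicator {p : ℝ × ℝ | p.1 < p.2} (fun p => b p.1 * g' p.2) := by
        ext p
        by_cases h : p.1 < p.2 <;> simp [hf, Function.uncurry, Set.indicator, h]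
      rw [this]
      exact ((hbm.comp measurable_fst).mul (hg'.measurable.comp measurable_snd)).indicator
        (measurableSet_lt measurable_fst measurable_snd)
    have hfint : Integrable (Function.uncurry f) (μ.prod μ) := by
      refine (integrable_const (A' * M)).mono' hfmeas.aestronglyMeasurable ?_
      filter_upwards with p
      rw [Real.norm_eq_abs]
      by_cases h : p.1 < p.2
      · simp only [hf, Function.uncurry, if_pos h]
        rw [abs_mul]
        exact mul_le_mul (hbd _) (hgM _) (abs_nonneg _) hA'
      · simp only [hf, Function.uncurry, if_neg h, abs_zero]
        positivity
    have swap := MeasureTheory.integral_integral_swap hfint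
    have inner1 : ∀ s ∈ Set.Ioc (0:ℝ) t, (∫ u, f s u ∂μ) = b s * ∫ u in s..t, g' u := by
      intro s hs
      have hind : (fun u => f s u) = Set.indicator (Set.Ioi s) (fun u => b s * g' u) := by
        ext u; by_cases h : s < u <;> simp [hf, Set.indicator, h]
      rw [hind, hμ, MeasureTheory.integral_indicator measurableSet_Ioi,
        Measure.restrict_restrict measurableSet_Ioi]
      have hset : Set.Ioi s ∩ Set.Ioc 0 t = Set.Ioc s t := by
        ext u
        constructor
        · rintro ⟨h1, _, h3⟩; exact ⟨h1, h3⟩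
        · rintro ⟨h1, h2⟩; exact ⟨h1, lt_trans hs.1 h1, h2⟩
      rw [hset, ← intervalIntegral.integral_of_le hs.2, intervalIntegral.integral_const_mul]
    have inner2 : ∀ u ∈ Set.Ioc (0:ℝ) t, (∫ s, f s u ∂μ) = g' u * F u := by
      intro u hu
      have hind : (fun s => f s u) = Set.indicator (Set.Iio u) (fun s => b s * g' u) := by
        ext s; by_cases h : s < u <;> simp [hf, Set.indicator, h]
      rw [hind, hμ, MeasureTheory.integral_indicator measurableSet_Iio,
        Measure.restrict_restrict measurableSet_Iio]
      have hset : Set.Iio u ∩ Set.Ioc 0 t = Set.Ioo 0 u := by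
        ext s
        constructor
        · rintro ⟨h1, h2, _⟩; exact ⟨h2, h1⟩
        · rintro ⟨h1, h2⟩; exact ⟨h2, h1, le_trans (le_of_lt h2) hu.2⟩
      rw [hset, ← MeasureTheory.integral_Ioc_eq_integral_Ioo, MeasureTheory.integral_mul_const,
        ← intervalIntegral.integral_of_le (le_of_lt hu.1)]
      ring
    calc (∫ s in Set.Ioc (0:ℝ) t, b s * ∫ u in s..t, g' u)
        = ∫ s, (∫ u, f s u ∂μ) ∂μ := by
          rw [hμ]
          exact MeasureTheory.setIntegral_congr_fun measurableSet_Ioc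
            (fun s hs => (inner1 s hs).symm)
      _ = ∫ u, (∫ s, f s u ∂μ) ∂μ := swap
      _ = ∫ u in Set.Ioc (0:ℝ) t, g' u * F u := by
          rw [hμ]
          exact MeasureTheory.setIntegral_congr_fun measurableSet_Ioc
            (fun u hu => inner2 u hu)
  -- final bound
  have hFt : |F t| ≤ δ := hF t ⟨ht0, htT⟩
  have hI2 : |∫ u in (0:ℝ)..t, g' u * F u| ≤ M * δ * T := by
    rw [intervalIntegral.integral_of_le ht0]
    have hb2 : ∀ u ∈ Set.Ioc (0:ℝ) t, ‖g' u * F u‖ ≤ M * δ := by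
      intro u hu
      rw [Real.norm_eq_abs, abs_mul]
      exact mul_le_mul (hgM u) (hF u ⟨le_of_lt hu.1, le_trans hu.2 htT⟩) (abs_nonneg _) hM
    have := norm_setIntegral_le_of_norm_le_const (measure_Ioc_lt_top (μ := volume)) hb2
    rw [Real.norm_eq_abs] at this
    calc |∫ u in Set.Ioc (0:ℝ) t, g' u * F u| ≤ M * δ * (volume (Set.Ioc (0:ℝ) t)).toReal := this
      _ = M * δ * t := by rw [Real.volume_Ioc]; rw [ENNReal.toReal_ofReal (by linarith)]; ring
      _ ≤ M * δ * T := mul_le_mul_of_nonneg_left htT (mul_nonneg hM hδ)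
  rw [e1, e2, fub]
  calc |F t * g t - ∫ u in (0:ℝ)..t, g' u * F u|
      ≤ |F t * g t| + |∫ u in (0:ℝ)..t, g' u * F u| := abs_sub _ _
    _ ≤ δ * 1 + M * δ * T := by
        refine add_le_add ?_ hI2
        rw [abs_mul]
        exact mul_le_mul hFt (hg1 t) (abs_nonneg _) hδ
    _ = δ * (1 + M * T) := by ring

lemma KAP.abs_sin_le_one (x : ℝ) : |Real.sin x| ≤ 1 :=
  abs_le.mpr ⟨Real.neg_one_le_sin x, Real.sin_le_one x⟩

lemma KAP.prim_hasDerivAt {f : ℝ → ℝ} (hf : Continuous f) (a x : ℝ) :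
    HasDerivAt (fun y => ∫ u in a..y, f u) (f x) x :=
  intervalIntegral.integral_hasDerivAt_right (hf.intervalIntegrable _ _)
    (hf.stronglyMeasurable.stronglyMeasurableAtFilter) hf.continuousAt

lemma KAP.sin_sub_sin_abs_le (x y : ℝ) : |Real.sin x - Real.sin y| ≤ |x - y| := by
  rw [Real.sin_sub_sin]
  have h1 : |Real.sin ((x - y)/2)| ≤ |(x - y)/2| := Real.abs_sin_le_abs
  have h2 : |Real.cos ((x + y)/2)| ≤ 1 := Real.abs_cos_le_one _
  calc |2 * Real.sin ((x - y)/2) * Real.cos ((x + y)/2)|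
      = 2 * |Real.sin ((x - y)/2)| * |Real.cos ((x + y)/2)| := by
        rw [abs_mul, abs_mul]; norm_num
    _ ≤ 2 * (|(x - y)/2|) * 1 :=
        mul_le_mul (mul_le_mul_of_nonneg_left h1 (by norm_num)) h2 (abs_nonneg _) (by positivity)
    _ = |x - y| := by rw [abs_div, abs_two]; ring

/-- Deterministic averaging principle on a compact time interval: if the
time-averaged coefficients a^ε converge uniformly (in the integral sense) to
the constant ā as ε → 0⁺, then the solutions of the dynamic Kuramoto system
converge uniformly on [0,T] to the solution of the averaged all-to-all
Kuramoto system. -/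
theorem kuramoto_averaging_principle
    (N : ℕ) (hN : 2 ≤ N) (K : ℝ) (hK : 0 < K) (A : ℝ) (hA : 0 < A)
    (ω : Fin N → ℝ) (T : ℝ) (hT : 0 < T)
    (abar : ℝ) (habar0 : 0 ≤ abar) (habarA : abar ≤ A)
    (α : Fin N → ℝ)
    (a : ℝ → ℝ → Fin N → Fin N → ℝ)
    (hmeas : ∀ ε : ℝ, 0 < ε → ∀ i j : Fin N, Measurable (fun t => a ε t i j))
    (hasym : ∀ ε : ℝ, 0 < ε → ∀ t ∈ Set.Icc (0:ℝ) T, ∀ i j : Fin N,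
      a ε t i j = a ε t j i)
    (habd : ∀ ε : ℝ, 0 < ε → ∀ t ∈ Set.Icc (0:ℝ) T, ∀ i j : Fin N,
      0 ≤ a ε t i j ∧ a ε t i j ≤ A)
    (θ : ℝ → ℝ → Fin N → ℝ)
    (hcont : ∀ ε : ℝ, 0 < ε → ContinuousOn (fun t => θ ε t) (Set.Icc (0:ℝ) T))
    (hinteq : ∀ ε : ℝ, 0 < ε → ∀ t ∈ Set.Icc (0:ℝ) T, ∀ i : Fin N,
      θ ε t i = α i + ∫ s in (0:ℝ)..t,
        (ω i + (K / N) * ∑ j : Fin N, a ε s i j * Real.sin (θ ε s j - θ ε s i)))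
    (θbar : ℝ → Fin N → ℝ)
    (hbar0 : θbar 0 = α)
    (hbarode : ∀ t ∈ Set.Icc (0:ℝ) T, ∀ i : Fin N,
      HasDerivAt (fun s => θbar s i)
        (ω i + (K / N) * ∑ j : Fin N, abar * Real.sin (θbar t j - θbar t i)) t)
    (have_ : ∀ i j : Fin N, ∀ δ : ℝ, 0 < δ → ∃ ε₀ : ℝ, 0 < ε₀ ∧
      ∀ ε : ℝ, 0 < ε → ε < ε₀ → ∀ t ∈ Set.Icc (0:ℝ) T,
        |∫ s in (0:ℝ)..t, (a ε s i j - abar)| < δ) :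
    ∀ δ : ℝ, 0 < δ → ∃ ε₀ : ℝ, 0 < ε₀ ∧
      ∀ ε : ℝ, 0 < ε → ε < ε₀ → ∀ t ∈ Set.Icc (0:ℝ) T, ∀ i : Fin N,
        |θ ε t i - θbar t i| < δ := by
  intro δ hδ
  have hT0 : (0:ℝ) ≤ T := hT.le
  have hNpos : 0 < N := by omega
  have hNR : (0:ℝ) < N := by exact_mod_cast hNpos
  have hNne : (N:ℝ) ≠ 0 := ne_of_gt hNR
  haveI : Nonempty (Fin N) := ⟨⟨0, hNpos⟩⟩
  -- constants
  set B : ℝ := ‖ω‖ + K * A with hBdef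
  have hB : 0 ≤ B := add_nonneg (norm_nonneg _) (mul_nonneg hK.le hA.le)
  set M : ℝ := 2 * B with hMdef
  have hM : 0 ≤ M := by positivity
  set lam : ℝ := 2 * K * A with hlamdef
  have hlam : 0 < lam := by positivity
  set C1 : ℝ := K * (1 + M * T) with hC1def
  have hC1 : 0 < C1 := by positivity
  set δ₁ : ℝ := δ / ((C1 + 1) * Real.exp (lam * T)) with hδ₁def
  have hδ₁ : 0 < δ₁ := by positivity
  have hfinal : C1 * δ₁ * Real.exp (lam * T) < δ := by
    have he : (0:ℝ) < Real.exp (lam * T) := Real.exp_pos _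
    have h1 : C1 * δ₁ * Real.exp (lam * T) = δ * C1 / (C1 + 1) := by
      rw [hδ₁def]; field_simp
    rw [h1, div_lt_iff₀ (by linarith)]
    nlinarith
  -- clamp function
  set c : ℝ → ℝ := fun s => max 0 (min s T) with hcdef
  have hcont_c : Continuous c := continuous_const.max (continuous_id.min continuous_const)
  have hcmem : ∀ s, c s ∈ Set.Icc (0:ℝ) T :=
    fun s => ⟨le_max_left _ _, max_le hT0 (min_le_right _ _)⟩
  have hcid : ∀ s ∈ Set.Icc (0:ℝ) T, c s = s := by
    intro s hs
    rw [hcdef]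
    simp only [min_eq_left hs.2, max_eq_right hs.1]
  -- averaged solution, clamped
  set ψ : ℝ → Fin N → ℝ := fun s => θbar (c s) with hψdef
  have hθbarC : ∀ i, ContinuousOn (fun s => θbar s i) (Set.Icc (0:ℝ) T) :=
    fun i s hs => ((hbarode s hs i).continuousAt).continuousWithinAt
  have hψci : ∀ i, Continuous (fun s => ψ s i) := by
    intro i
    exact (hθbarC i).comp_continuous hcont_c hcmem
  set D : Fin N → ℝ → ℝ :=
    fun i s => ω i + (K / N) * ∑ j : Fin N, abar * Real.sin (ψ s j - ψ s i) with hDdef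
  have hDc : ∀ i, Continuous (D i) := by
    intro i
    apply continuous_const.add
    apply continuous_const.mul
    exact continuous_finset_sum _ fun j _ =>
      continuous_const.mul (Real.continuous_sin.comp ((hψci j).sub (hψci i)))
  have hsum1 : ∀ (s : ℝ) (i : Fin N),
      |∑ j : Fin N, abar * Real.sin (ψ s j - ψ s i)| ≤ N * abar := by
    intro s i
    calc |∑ j : Fin N, abar * Real.sin (ψ s j - ψ s i)|
        ≤ ∑ j : Fin N, |abar * Real.sin (ψ s j - ψ s i)| := Finset.abs_sum_le_sum_abs _ _
      _ ≤ ∑ _j : Fin N, abar := by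
          refine Finset.sum_le_sum fun j _ => ?_
          rw [abs_mul, abs_of_nonneg habar0]
          calc abar * |Real.sin (ψ s j - ψ s i)| ≤ abar * 1 :=
                mul_le_mul_of_nonneg_left (KAP.abs_sin_le_one _) habar0
            _ = abar := mul_one _
      _ = N * abar := by simp [Finset.sum_const, Finset.card_univ, nsmul_eq_mul]
  have hDb : ∀ (i : Fin N) (s : ℝ), |D i s| ≤ B := by
    intro i s
    have h1 : |D i s| ≤ |ω i| + (K / N) * (N * abar) := by
      refine (abs_add_le _ _).trans (add_le_add le_rfl ?_)
      rw [abs_mul, abs_of_nonneg (by positivity : (0:ℝ) ≤ K / N)]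
      exact mul_le_mul_of_nonneg_left (hsum1 s i) (by positivity)
    have h2 : (K / (N:ℝ)) * (N * abar) = K * abar := by field_simp
    have h3 : |ω i| ≤ ‖ω‖ := by
      rw [← Real.norm_eq_abs]; exact norm_le_pi_norm ω i
    have h4 : K * abar ≤ K * A := mul_le_mul_of_nonneg_left habarA hK.le
    rw [hBdef]; rw [h2] at h1; linarith
  -- derivative of ψ on the interior
  have hψderiv : ∀ (i : Fin N), ∀ x ∈ Set.Ioo (0:ℝ) T,
      HasDerivAt (fun s => ψ s i) (D i x) x := by
    intro i x hx
    have hxI : x ∈ Set.Icc (0:ℝ) T := ⟨hx.1.le, hx.2.le⟩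
    have h0 := hbarode x hxI i
    have heq : (fun s => ψ s i) =ᶠ[nhds x] (fun s => θbar s i) := by
      filter_upwards [isOpen_Ioo.mem_nhds hx] with s hs
      show θbar (c s) i = θbar s i
      rw [hcid s ⟨hs.1.le, hs.2.le⟩]
    have hval : D i x = ω i + (K / N) * ∑ j : Fin N, abar * Real.sin (θbar x j - θbar x i) := by
      rw [hDdef]
      simp only [hψdef, hcid x hxI]
    rw [hval]
    exact HasDerivAt.congr_of_eventuallyEq h0 heq
  -- integral equation for ψ
  have hψ0 : ∀ i, ψ 0 i = α i := by
    intro i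
    show θbar (c 0) i = α i
    rw [hcid 0 ⟨le_rfl, hT0⟩, hbar0]
  have hψeq : ∀ t ∈ Set.Icc (0:ℝ) T, ∀ i : Fin N,
      ψ t i = α i + ∫ s in (0:ℝ)..t, D i s := by
    intro t ht i
    have hftc : (∫ s in (0:ℝ)..t, D i s) = ψ t i - ψ 0 i := by
      refine intervalIntegral.integral_eq_sub_of_hasDerivAt_of_le ht.1
        ((hψci i).continuousOn)
        (fun x hx => hψderiv i x ⟨hx.1, lt_of_lt_of_le hx.2 ht.2⟩)
        ((hDc i).intervalIntegrable _ _)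
    rw [hftc, hψ0 i]; ring
  -- choose a common ε₀
  choose f hf0 hf using fun (p : Fin N × Fin N) => have_ p.1 p.2 δ₁ hδ₁
  refine ⟨Finset.univ.inf' Finset.univ_nonempty f, ?_, ?_⟩
  · rw [Finset.lt_inf'_iff]
    exact fun p _ => hf0 p
  intro ε hε hεlt
  have hεp : ∀ (i j : Fin N), ∀ s ∈ Set.Icc (0:ℝ) T,
      |∫ u in (0:ℝ)..s, (a ε u i j - abar)| < δ₁ := by
    intro i j s hs
    exact hf (i, j) ε hε
      (lt_of_lt_of_le hεlt (Finset.inf'_le _ (Finset.mem_univ (i, j)))) s hs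
  -- clamped solution of the dynamic system
  set φ : ℝ → Fin N → ℝ := fun s => θ ε (c s) with hφdef
  have hφcont : Continuous φ := (hcont ε hε).comp_continuous hcont_c hcmem
  have hφci : ∀ i, Continuous (fun s => φ s i) := fun i => (continuous_apply i).comp hφcont
  set b : Fin N → Fin N → ℝ → ℝ := fun i j s => a ε (c s) i j with hbdef
  have hbmeas : ∀ i j, Measurable (b i j) := fun i j => (hmeas ε hε i j).comp hcont_c.measurable
  have hbbd : ∀ i j s, 0 ≤ b i j s ∧ b i j s ≤ A := fun i j s => habd ε hε (c s) (hcmem s) i j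
  have hbabs : ∀ i j s, |b i j s - abar| ≤ A := by
    intro i j s
    have h := hbbd i j s
    rw [abs_le]; constructor <;> linarith
  -- transferred integral equation for φ
  have hφeq : ∀ t ∈ Set.Icc (0:ℝ) T, ∀ i : Fin N,
      φ t i = α i + ∫ s in (0:ℝ)..t,
        (ω i + (K / N) * ∑ j : Fin N, b i j s * Real.sin (φ s j - φ s i)) := by
    intro t ht i
    have h0 := hinteq ε hε t ht i
    have hl : φ t i = θ ε t i := by
      show θ ε (c t) i = θ ε t i
      rw [hcid t ht]
    have hint : (∫ s in (0:ℝ)..t,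
          (ω i + (K / N) * ∑ j : Fin N, b i j s * Real.sin (φ s j - φ s i)))
        = ∫ s in (0:ℝ)..t,
          (ω i + (K / N) * ∑ j : Fin N, a ε s i j * Real.sin (θ ε s j - θ ε s i)) := by
      apply intervalIntegral.integral_congr
      intro s hs
      rw [Set.uIcc_of_le ht.1] at hs
      have hsI : s ∈ Set.Icc (0:ℝ) T := ⟨hs.1, le_trans hs.2 ht.2⟩
      show ω i + (K / N) * ∑ j : Fin N, a ε (c s) i j * Real.sin (θ ε (c s) j - θ ε (c s) i) = _
      rw [hcid s hsI]
    rw [hl, h0, hint]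
  -- generic sum bound
  have hKsum : ∀ (x : Fin N → ℝ) (m : ℝ), (∀ j, |x j| ≤ m) →
      |(K / N) * ∑ j : Fin N, x j| ≤ K * m := by
    intro x m hx
    calc |(K / N) * ∑ j : Fin N, x j| = (K / N) * |∑ j : Fin N, x j| := by
          rw [abs_mul, abs_of_nonneg (by positivity : (0:ℝ) ≤ K / N)]
      _ ≤ (K / N) * ∑ j : Fin N, |x j| :=
          mul_le_mul_of_nonneg_left (Finset.abs_sum_le_sum_abs _ _) (by positivity)
      _ ≤ (K / N) * ∑ _j : Fin N, m :=
          mul_le_mul_of_nonneg_left (Finset.sum_le_sum fun j _ => hx j) (by positivity)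
      _ = (K / N) * (N * m) := by simp [Finset.sum_const, Finset.card_univ, nsmul_eq_mul]
      _ = K * m := by field_simp
  -- the deviation and its basic facts
  set V : ℝ → ℝ := fun s => dist (φ s) (ψ s) with hVdef
  have hVcont : Continuous V := hφcont.dist (continuous_pi hψci)
  have hV0 : ∀ s, 0 ≤ V s := fun s => dist_nonneg
  have hcoord : ∀ (s : ℝ) (k : Fin N), |φ s k - ψ s k| ≤ V s := by
    intro s k
    rw [← Real.dist_eq]
    exact dist_le_pi_dist _ _ k
  set W : ℝ → ℝ := fun x => ∫ s in (0:ℝ)..x, V s with hWdef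
  have hWderiv : ∀ x, HasDerivAt W (V x) x := KAP.prim_hasDerivAt hVcont 0
  have hWnn : ∀ x, 0 ≤ x → 0 ≤ W x :=
    fun x hx => intervalIntegral.integral_nonneg hx (fun s _ => hV0 s)
  -- error decomposition
  set p : Fin N → ℝ → ℝ := fun i s => (K / N) * ∑ j : Fin N,
    b i j s * (Real.sin (φ s j - φ s i) - Real.sin (ψ s j - ψ s i)) with hpdef
  set r : Fin N → Fin N → ℝ → ℝ :=
    fun i j s => (b i j s - abar) * Real.sin (ψ s j - ψ s i) with hrdef
  have hpmeas : ∀ i, Measurable (p i) := by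
    intro i
    apply Measurable.const_mul
    apply Finset.measurable_sum
    intro j _
    exact (hbmeas i j).mul
      (((Real.continuous_sin.comp ((hφci j).sub (hφci i))).sub
        (Real.continuous_sin.comp ((hψci j).sub (hψci i)))).measurable)
  have hrmeas : ∀ i j, Measurable (r i j) := by
    intro i j
    exact ((hbmeas i j).sub measurable_const).mul
      ((Real.continuous_sin.comp ((hψci j).sub (hψci i))).measurable)
  have hrbd : ∀ i j s, |r i j s| ≤ A := by
    intro i j s
    rw [hrdef]
    calc |(b i j s - abar) * Real.sin (ψ s j - ψ s i)|
        = |b i j s - abar| * |Real.sin (ψ s j - ψ s i)| := abs_mul _ _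
      _ ≤ A * 1 := mul_le_mul (hbabs i j s) (KAP.abs_sin_le_one _) (abs_nonneg _) hA.le
      _ = A := mul_one _
  have hpbd1 : ∀ i s, |p i s| ≤ K * (A * 2) := by
    intro i s
    refine hKsum _ _ fun j => ?_
    calc |b i j s * (Real.sin (φ s j - φ s i) - Real.sin (ψ s j - ψ s i))|
        = |b i j s| * |Real.sin (φ s j - φ s i) - Real.sin (ψ s j - ψ s i)| := abs_mul _ _
      _ ≤ A * 2 := by
          refine mul_le_mul ?_ ?_ (abs_nonneg _) hA.le
          · rw [abs_of_nonneg (hbbd i j s).1]; exact (hbbd i j s).2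
          · calc |Real.sin (φ s j - φ s i) - Real.sin (ψ s j - ψ s i)|
                ≤ |Real.sin (φ s j - φ s i)| + |Real.sin (ψ s j - ψ s i)| := abs_sub _ _
              _ ≤ 1 + 1 := add_le_add (KAP.abs_sin_le_one _) (KAP.abs_sin_le_one _)
              _ = 2 := by norm_num
  have hpbd2 : ∀ i s, |p i s| ≤ lam * V s := by
    intro i s
    have h := hKsum (fun j => b i j s * (Real.sin (φ s j - φ s i) - Real.sin (ψ s j - ψ s i)))
      (A * (2 * V s)) ?_
    · calc |p i s| ≤ K * (A * (2 * V s)) := h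
        _ = lam * V s := by rw [hlamdef]; ring
    intro j
    calc |b i j s * (Real.sin (φ s j - φ s i) - Real.sin (ψ s j - ψ s i))|
        = |b i j s| * |Real.sin (φ s j - φ s i) - Real.sin (ψ s j - ψ s i)| := abs_mul _ _
      _ ≤ A * (2 * V s) := by
          refine mul_le_mul ?_ ?_ (abs_nonneg _) hA.le
          · rw [abs_of_nonneg (hbbd i j s).1]; exact (hbbd i j s).2
          · calc |Real.sin (φ s j - φ s i) - Real.sin (ψ s j - ψ s i)|
                ≤ |(φ s j - φ s i) - (ψ s j - ψ s i)| := KAP.sin_sub_sin_abs_le _ _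
              _ = |(φ s j - ψ s j) - (φ s i - ψ s i)| := by ring_nf
              _ ≤ |φ s j - ψ s j| + |φ s i - ψ s i| := abs_sub _ _
              _ ≤ V s + V s := add_le_add (hcoord s j) (hcoord s i)
              _ = 2 * V s := by ring
  -- error representation
  have herr : ∀ t ∈ Set.Icc (0:ℝ) T, ∀ i : Fin N, φ t i - ψ t i =
      (∫ s in (0:ℝ)..t, p i s) + (K / N) * ∑ j : Fin N, ∫ s in (0:ℝ)..t, r i j s := by
    intro t ht i
    have hXmeas : Measurable (fun s => ω i + (K / N) * ∑ j : Fin N,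
        b i j s * Real.sin (φ s j - φ s i)) := by
      apply Measurable.const_add
      apply Measurable.const_mul
      apply Finset.measurable_sum
      intro j _
      exact (hbmeas i j).mul ((Real.continuous_sin.comp ((hφci j).sub (hφci i))).measurable)
    have hXbd : ∀ s, |ω i + (K / N) * ∑ j : Fin N, b i j s * Real.sin (φ s j - φ s i)|
        ≤ |ω i| + K * A := by
      intro s
      refine (abs_add_le _ _).trans (add_le_add le_rfl ?_)
      refine hKsum _ _ fun j => ?_
      calc |b i j s * Real.sin (φ s j - φ s i)|
          = |b i j s| * |Real.sin (φ s j - φ s i)| := abs_mul _ _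
        _ ≤ A * 1 := by
            refine mul_le_mul ?_ (KAP.abs_sin_le_one _) (abs_nonneg _) hA.le
            rw [abs_of_nonneg (hbbd i j s).1]; exact (hbbd i j s).2
        _ = A := mul_one _
    have hXint : IntervalIntegrable (fun s => ω i + (K / N) * ∑ j : Fin N,
        b i j s * Real.sin (φ s j - φ s i)) volume 0 t := KAP.II hXmeas hXbd 0 t
    have hYint : IntervalIntegrable (D i) volume 0 t := (hDc i).intervalIntegrable 0 t
    have hpint : IntervalIntegrable (p i) volume 0 t := KAP.II (hpmeas i) (hpbd1 i) 0 t
    have hrint : ∀ j, IntervalIntegrable (r i j) volume 0 t :=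
      fun j => KAP.II (hrmeas i j) (hrbd i j) 0 t
    have hrsumint : IntervalIntegrable (fun s => (K / N) * ∑ j : Fin N, r i j s) volume 0 t := by
      refine KAP.II ?_ (M := K * A) ?_ 0 t
      · exact (Finset.measurable_sum _ fun j _ => hrmeas i j).const_mul _
      · intro s
        exact hKsum _ _ fun j => hrbd i j s
    have h1 := hφeq t ht i
    have h2 := hψeq t ht i
    have hsub : φ t i - ψ t i = ∫ s in (0:ℝ)..t,
        ((ω i + (K / N) * ∑ j : Fin N, b i j s * Real.sin (φ s j - φ s i)) - D i s) := by
      rw [intervalIntegral.integral_sub hXint hYint, h1, h2]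
      ring
    have hptw : ∀ s : ℝ,
        (ω i + (K / N) * ∑ j : Fin N, b i j s * Real.sin (φ s j - φ s i)) - D i s
        = p i s + (K / N) * ∑ j : Fin N, r i j s := by
      intro s
      rw [hDdef, hpdef, hrdef]
      simp only
      have e : (∑ j : Fin N, b i j s * Real.sin (φ s j - φ s i))
          - (∑ j : Fin N, abar * Real.sin (ψ s j - ψ s i))
          = (∑ j : Fin N, b i j s * (Real.sin (φ s j - φ s i) - Real.sin (ψ s j - ψ s i)))
            + ∑ j : Fin N, (b i j s - abar) * Real.sin (ψ s j - ψ s i) := by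
        rw [← Finset.sum_sub_distrib, ← Finset.sum_add_distrib]
        exact Finset.sum_congr rfl fun j _ => by ring
      have e2 : (K / (N:ℝ)) * ((∑ j : Fin N, b i j s * Real.sin (φ s j - φ s i))
          - ∑ j : Fin N, abar * Real.sin (ψ s j - ψ s i))
          = (K / N) * ((∑ j : Fin N, b i j s * (Real.sin (φ s j - φ s i)
              - Real.sin (ψ s j - ψ s i)))
            + ∑ j : Fin N, (b i j s - abar) * Real.sin (ψ s j - ψ s i)) := by rw [e]
      linear_combination e2
    have hx1 : (∫ s in (0:ℝ)..t, (p i s + (K / N) * ∑ j : Fin N, r i j s))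
        = (∫ s in (0:ℝ)..t, p i s) + ∫ s in (0:ℝ)..t, (K / N) * ∑ j : Fin N, r i j s :=
      intervalIntegral.integral_add hpint hrsumint
    have hx2 : (∫ s in (0:ℝ)..t, (K / N) * ∑ j : Fin N, r i j s)
        = (K / N) * ∫ s in (0:ℝ)..t, ∑ j : Fin N, r i j s :=
      intervalIntegral.integral_const_mul _ _
    have hx3 : (∫ s in (0:ℝ)..t, ∑ j : Fin N, r i j s)
        = ∑ j : Fin N, ∫ s in (0:ℝ)..t, r i j s :=
      intervalIntegral.integral_finset_sum (fun j _ => hrint j)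
    rw [hsub, intervalIntegral.integral_congr (fun s _ => hptw s), hx1, hx2, hx3]
  -- oscillation bound for each pair
  have hosc : ∀ (i j : Fin N), ∀ t ∈ Set.Icc (0:ℝ) T,
      |∫ s in (0:ℝ)..t, r i j s| ≤ δ₁ * (1 + M * T) := by
    intro i j t ht
    have hgder : ∀ x ∈ Set.Ioo (0:ℝ) T, HasDerivAt (fun s => Real.sin (ψ s j - ψ s i))
        (Real.cos (ψ x j - ψ x i) * (D j x - D i x)) x := by
      intro x hx
      exact HasDerivAt.sin ((hψderiv j x hx).sub (hψderiv i x hx))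
    have hg'M : ∀ s, |Real.cos (ψ s j - ψ s i) * (D j s - D i s)| ≤ M := by
      intro s
      rw [abs_mul, hMdef]
      calc |Real.cos (ψ s j - ψ s i)| * |D j s - D i s| ≤ 1 * (B + B) := by
            refine mul_le_mul (Real.abs_cos_le_one _) ?_ (abs_nonneg _) zero_le_one
            exact (abs_sub _ _).trans (add_le_add (hDb j s) (hDb i s))
        _ = 2 * B := by ring
    have hFb : ∀ s ∈ Set.Icc (0:ℝ) T, |∫ u in (0:ℝ)..s, (b i j u - abar)| ≤ δ₁ := by
      intro s hs
      have hc2 : (∫ u in (0:ℝ)..s, (b i j u - abar))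
          = ∫ u in (0:ℝ)..s, (a ε u i j - abar) := by
        apply intervalIntegral.integral_congr
        intro v hv
        rw [Set.uIcc_of_le hs.1] at hv
        show a ε (c v) i j - abar = a ε v i j - abar
        rw [hcid v ⟨hv.1, le_trans hv.2 hs.2⟩]
      rw [hc2]
      exact (hεp i j s hs).le
    exact KAP.osc ((hbmeas i j).sub measurable_const) (hbabs i j)
      (Real.continuous_sin.comp ((hψci j).sub (hψci i)))
      (fun s => KAP.abs_sin_le_one _)
      ((Real.continuous_cos.comp ((hψci j).sub (hψci i))).mul ((hDc j).sub (hDc i)))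
      hg'M hT0 hgder hFb ht
  -- key integral inequality
  have key : ∀ t ∈ Set.Icc (0:ℝ) T, V t ≤ C1 * δ₁ + lam * W t := by
    intro t ht
    have hWt : 0 ≤ W t := hWnn t ht.1
    have hrhs : 0 ≤ C1 * δ₁ + lam * W t := by positivity
    refine (dist_pi_le_iff hrhs).mpr fun i => ?_
    rw [Real.dist_eq, herr t ht i]
    have hp1 : |∫ s in (0:ℝ)..t, p i s| ≤ lam * W t := by
      have hpint : IntervalIntegrable (p i) volume 0 t := KAP.II (hpmeas i) (hpbd1 i) 0 t
      calc |∫ s in (0:ℝ)..t, p i s| ≤ ∫ s in (0:ℝ)..t, |p i s| :=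
            intervalIntegral.abs_integral_le_integral_abs ht.1
        _ ≤ ∫ s in (0:ℝ)..t, lam * V s := by
            refine intervalIntegral.integral_mono_on ht.1 hpint.abs
              ((continuous_const.mul hVcont).intervalIntegrable 0 t) ?_
            intro s _
            exact hpbd2 i s
        _ = lam * W t := intervalIntegral.integral_const_mul _ _
    have hp2 : |(K / N) * ∑ j : Fin N, ∫ s in (0:ℝ)..t, r i j s| ≤ C1 * δ₁ := by
      have := hKsum (fun j => ∫ s in (0:ℝ)..t, r i j s) (δ₁ * (1 + M * T))
        (fun j => hosc i j t ht)
      calc |(K / N) * ∑ j : Fin N, ∫ s in (0:ℝ)..t, r i j s|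
          ≤ K * (δ₁ * (1 + M * T)) := this
        _ = C1 * δ₁ := by rw [hC1def]; ring
    calc |(∫ s in (0:ℝ)..t, p i s) + (K / N) * ∑ j : Fin N, ∫ s in (0:ℝ)..t, r i j s|
        ≤ |∫ s in (0:ℝ)..t, p i s|
          + |(K / N) * ∑ j : Fin N, ∫ s in (0:ℝ)..t, r i j s| := abs_add_le _ _
      _ ≤ lam * W t + C1 * δ₁ := add_le_add hp1 hp2
      _ = C1 * δ₁ + lam * W t := by ring
  -- Gronwall
  have hWcont : Continuous W := continuous_iff_continuousAt.mpr fun x => (hWderiv x).continuousAt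
  have hgron : ∀ x ∈ Set.Icc (0:ℝ) T,
      ‖W x‖ ≤ gronwallBound 0 lam (C1 * δ₁) (x - 0) := by
    refine norm_le_gronwallBound_of_norm_deriv_right_le hWcont.continuousOn
      (fun x _ => (hWderiv x).hasDerivWithinAt) ?_ ?_
    · show ‖∫ s in (0:ℝ)..(0:ℝ), V s‖ ≤ 0
      rw [intervalIntegral.integral_same, norm_zero]
    · intro x hx
      have hx' : x ∈ Set.Icc (0:ℝ) T := ⟨hx.1, hx.2.le⟩
      have h1 := key x hx'
      rw [Real.norm_eq_abs, Real.norm_eq_abs, abs_of_nonneg (hV0 x),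
        abs_of_nonneg (hWnn x hx.1)]
      linarith
  -- conclusion
  intro t ht i
  have hWt : W t ≤ C1 * δ₁ / lam * (Real.exp (lam * t) - 1) := by
    have h1 := hgron t ht
    rw [gronwallBound_of_K_ne_0 (ne_of_gt hlam)] at h1
    rw [Real.norm_eq_abs, abs_of_nonneg (hWnn t ht.1)] at h1
    simpa using h1
  have hVt : V t ≤ C1 * δ₁ * Real.exp (lam * t) := by
    have h1 := key t ht
    have h2 : lam * (C1 * δ₁ / lam * (Real.exp (lam * t) - 1))
        = C1 * δ₁ * (Real.exp (lam * t) - 1) := by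
      field_simp
    nlinarith [mul_le_mul_of_nonneg_left hWt hlam.le]
  have hVT : V t ≤ C1 * δ₁ * Real.exp (lam * T) := by
    have hexp : Real.exp (lam * t) ≤ Real.exp (lam * T) :=
      Real.exp_le_exp.mpr (mul_le_mul_of_nonneg_left ht.2 hlam.le)
    have : C1 * δ₁ * Real.exp (lam * t) ≤ C1 * δ₁ * Real.exp (lam * T) :=
      mul_le_mul_of_nonneg_left hexp (by positivity)
    linarith
  have hfin : |θ ε t i - θbar t i| = |φ t i - ψ t i| := by
    show _ = |θ ε (c t) i - θbar (c t) i|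
    rw [hcid t ht]
  rw [hfin]
  calc |φ t i - ψ t i| ≤ V t := hcoord t i
    _ ≤ C1 * δ₁ * Real.exp (lam * T) := hVT
    _ < δ := hfinal
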